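/- Let Ω be a compact metric space, (Ω, ℝ, σ) a minimal flow on Ω, E a metric space, and φ : ℝ₊ × E × Ω → E a continuous cocycle over (Ω, ℝ, σ). Suppose there exist u₀ ∈ E and ω₀ ∈ Ω such that the set {φ(t, u₀, ω₀) : t ≥ 0} has compact closure in E. Then the skew-product semiflow π(t, (u, ω)) := (φ(t, u, ω), σ(t, ω)) on X = E × Ω possesses a recurrent point; in particular, for every ω ∈ Ω (e.g., ω = ω₀) there exists u ∈ E such that (u, ω) is a recurrent point of (X, ℝ₊, π). -/

import Mathlib

open Filter Topology NNReal

/-- Let `Ω` be a compact metric space carrying a minimal flow `σ`, and let `φ` be a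
continuous cocycle over `(Ω, ℝ, σ)` with fiber a metric space `E`. If some trajectory
`{φ(t, u₀, ω₀) : t ≥ 0}` has compact closure in `E`, then for every `ω ∈ Ω` there exists
`u ∈ E` such that `(u, ω)` is a recurrent point of the skew-product semiflow
`π(t, (u, ω)) = (φ(t, u, ω), σ(t, ω))` on `E × Ω`: it is almost recurrent and the closure
of its positive semi-trajectory is compact. -/
theorem skew_product_has_recurrent_point {Ω E : Type*}
    [MetricSpace Ω] [CompactSpace Ω] [MetricSpace E]
    (σ : ℝ → Ω → Ω)
    (hσcont : Continuous fun p : ℝ × Ω => σ p.1 p.2)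
    (hσid : ∀ ω : Ω, σ 0 ω = ω)
    (hσadd : ∀ (t τ : ℝ) (ω : Ω), σ (t + τ) ω = σ t (σ τ ω))
    (hmin : ∀ F : Set Ω, F.Nonempty → IsClosed F →
      (∀ ω ∈ F, ∀ t : ℝ, σ t ω ∈ F) → F = Set.univ)
    (φ : ℝ≥0 → E → Ω → E)
    (hφcont : Continuous fun p : ℝ≥0 × E × Ω => φ p.1 p.2.1 p.2.2)
    (hφid : ∀ (u : E) (ω : Ω), φ 0 u ω = u)
    (hφadd : ∀ (t τ : ℝ≥0) (u : E) (ω : Ω),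
      φ (t + τ) u ω = φ t (φ τ u ω) (σ (τ : ℝ) ω))
    (u₀ : E) (ω₀ : Ω)
    (hb : IsCompact (closure (Set.range fun t : ℝ≥0 => φ t u₀ ω₀))) :
    ∀ ω : Ω, ∃ u : E,
      (∀ ε > (0 : ℝ), ∃ l > (0 : ℝ≥0), ∀ a : ℝ≥0, ∃ τ ∈ Set.Icc a (a + l),
        dist ((φ τ u ω, σ (τ : ℝ) ω) : E × Ω) ((u, ω) : E × Ω) < ε) ∧
      IsCompact (closure (Set.range fun t : ℝ≥0 =>
        ((φ t u ω, σ (t : ℝ) ω) : E × Ω))) := by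
  -- The skew-product semiflow
  set π : ℝ≥0 → E × Ω → E × Ω := fun t x => (φ t x.1 x.2, σ (t : ℝ) x.2) with hπdef
  have hπcont : Continuous fun p : ℝ≥0 × (E × Ω) => π p.1 p.2 := by
    apply Continuous.prodMk
    · exact hφcont
    · exact hσcont.comp
        ((NNReal.continuous_coe.comp continuous_fst).prodMk
          (continuous_snd.comp continuous_snd))
  have hπt : ∀ t : ℝ≥0, Continuous (π t) := fun t =>
    hπcont.comp (Continuous.prodMk_right t)
  have hπ0 : ∀ x : E × Ω, π 0 x = x := by
    intro x; simp [hπdef, hφid, hσid]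
  have hπadd : ∀ (t s : ℝ≥0) (x : E × Ω), π (t + s) x = π t (π s x) := by
    intro t s x
    simp only [hπdef, hφadd]
    congr 1
    rw [NNReal.coe_add, hσadd]
  -- the orbit closure of (u₀, ω₀) is compact
  set x₀ : E × Ω := (u₀, ω₀) with hx₀
  set K₀ : Set (E × Ω) := closure (Set.range fun t : ℝ≥0 => π t x₀) with hK₀
  have hK₀comp : IsCompact K₀ := by
    apply IsCompact.of_isClosed_subset (hb.prod isCompact_univ) isClosed_closure
    apply closure_mono ?_ |>.trans
    · exact (closure_minimal (fun y hy => hy)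
        ((hb.isClosed).prod isClosed_univ)).trans (le_refl _)
    · rintro y ⟨t, rfl⟩
      exact ⟨subset_closure ⟨t, rfl⟩, trivial⟩
  have hK₀ne : K₀.Nonempty := ⟨π 0 x₀, subset_closure ⟨0, rfl⟩⟩
  have hK₀cl : IsClosed K₀ := isClosed_closure
  -- invariance predicate
  set Inv : Set (E × Ω) → Prop := fun A => ∀ x ∈ A, ∀ t : ℝ≥0, π t x ∈ A with hInv
  have hK₀inv : Inv K₀ := by
    intro x hx t
    have hm : Set.MapsTo (π t) (Set.range fun s : ℝ≥0 => π s x₀)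
        (Set.range fun s : ℝ≥0 => π s x₀) := by
      rintro y ⟨s, rfl⟩
      exact ⟨t + s, hπadd t s x₀⟩
    exact hm.closure (hπt t) hx
  -- Zorn: find a minimal nonempty closed invariant subset M of K₀
  set S : Set (Set (E × Ω)) :=
    {A | A.Nonempty ∧ IsClosed A ∧ A ⊆ K₀ ∧ Inv A} with hS
  have hScomp : ∀ A ∈ S, IsCompact A := fun A hA =>
    IsCompact.of_isClosed_subset hK₀comp hA.2.1 hA.2.2.1
  obtain ⟨M, -, hMS, hMmin⟩ :
      ∃ m ⊆ K₀, Minimal (fun A => A ∈ S) m := by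
    apply zorn_superset_nonempty
    · intro c hcS hchain hcne
      refine ⟨⋂₀ c, ⟨?_, ?_, ?_, ?_⟩, fun A hA => Set.sInter_subset_of_mem hA⟩
      · -- nonempty: directed intersection of nonempty compacts
        have : Nonempty c := hcne.to_subtype
        have hne : (⋂ A : c, (A : Set (E × Ω))).Nonempty := by
          apply IsCompact.nonempty_iInter_of_directed_nonempty_isCompact_isClosed
          · rintro ⟨A, hA⟩ ⟨B, hB⟩
            rcases hchain.total hA hB with h | h
            · exact ⟨⟨A, hA⟩, le_refl _, h⟩
            · exact ⟨⟨B, hB⟩, h, le_refl _⟩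
          · exact fun A => (hcS A.2).1
          · exact fun A => hScomp A (hcS A.2)
          · exact fun A => (hcS A.2).2.1
        rwa [Set.sInter_eq_iInter]
      · exact isClosed_sInter fun A hA => (hcS hA).2.1
      · obtain ⟨A, hA⟩ := hcne
        exact (Set.sInter_subset_of_mem hA).trans (hcS hA).2.2.1
      · intro x hx t
        rw [Set.mem_sInter] at hx ⊢
        exact fun A hA => (hcS hA).2.2.2 x (hx A hA) t
    · exact ⟨hK₀ne, hK₀cl, le_refl _, hK₀inv⟩
  obtain ⟨hMne, hMcl, hMK₀, hMinv⟩ := hMS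
  have hMcomp : IsCompact M := IsCompact.of_isClosed_subset hK₀comp hMcl hMK₀
  -- key minimality consequence: every orbit closure in M equals M
  have horbit : ∀ y ∈ M, closure (Set.range fun t : ℝ≥0 => π t y) = M := by
    intro y hy
    have hsub : closure (Set.range fun t : ℝ≥0 => π t y) ⊆ M :=
      closure_minimal (by rintro z ⟨t, rfl⟩; exact hMinv y hy t) hMcl
    have hCinS : closure (Set.range fun t : ℝ≥0 => π t y) ∈ S := by
      refine ⟨⟨π 0 y, subset_closure ⟨0, rfl⟩⟩, isClosed_closure,
        hsub.trans hMK₀, ?_⟩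
      intro x hx t
      have hm : Set.MapsTo (π t) (Set.range fun s : ℝ≥0 => π s y)
          (Set.range fun s : ℝ≥0 => π s y) := by
        rintro z ⟨s, rfl⟩
        exact ⟨t + s, hπadd t s y⟩
      exact hm.closure (hπt t) hx
    exact le_antisymm hsub (hMmin hCinS hsub)
  -- the projection of M to Ω : it is all of Ω
  set P : Set Ω := Prod.snd '' M with hP
  have hPcomp : IsCompact P := hMcomp.image continuous_snd
  have hPne : P.Nonempty := hMne.image _
  have hPinv : ∀ t : ℝ≥0, ∀ ω' ∈ P, σ (t : ℝ) ω' ∈ P := by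
    rintro t ω' ⟨x, hx, rfl⟩
    exact ⟨π t x, hMinv x hx t, rfl⟩
  -- image of P is antitone
  have hPanti : ∀ s t : ℝ≥0, s ≤ t → σ (t : ℝ) '' P ⊆ σ (s : ℝ) '' P := by
    intro s t hst
    rintro y ⟨ω', hω', rfl⟩
    refine ⟨σ ((t - s : ℝ≥0) : ℝ) ω', hPinv _ _ hω', ?_⟩
    rw [← hσadd]
    congr 1
    rw [← NNReal.coe_add, add_tsub_cancel_of_le hst]
  set K : Set Ω := ⋂ s : ℝ≥0, σ (s : ℝ) '' P with hK
  have hKcompmem : ∀ s : ℝ≥0, IsCompact (σ (s : ℝ) '' P) := fun s =>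
    hPcomp.image (hσcont.comp (Continuous.prodMk_right (s : ℝ)))
  have hKne : K.Nonempty := by
    apply IsCompact.nonempty_iInter_of_directed_nonempty_isCompact_isClosed
    · intro s t
      exact ⟨max s t, hPanti s (max s t) (le_max_left _ _),
        hPanti t (max s t) (le_max_right _ _)⟩
    · exact fun s => hPne.image _
    · exact hKcompmem
    · exact fun s => (hKcompmem s).isClosed
  have hKcl : IsClosed K :=
    isClosed_iInter fun s => (hKcompmem s).isClosed
  have hKinv : ∀ ω' ∈ K, ∀ t : ℝ, σ t ω' ∈ K := by
    intro ω' hω' t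
    rw [Set.mem_iInter] at hω' ⊢
    intro s
    -- choose r ≥ 0 with r ≥ s - t
    set r : ℝ≥0 := Real.toNNReal ((s : ℝ) - t) with hr
    obtain ⟨p, hp, hpe⟩ := hω' r
    have hrge : (s : ℝ) - t ≤ (r : ℝ) := Real.le_coe_toNNReal _
    have hnn : 0 ≤ t + (r : ℝ) - s := by linarith
    refine ⟨σ (t + (r : ℝ) - s) p, ?_, ?_⟩
    · -- σ (t + r - s) p ∈ P since t + r - s ≥ 0
      have := hPinv ⟨t + (r : ℝ) - s, hnn⟩ p hp
      exact this
    · rw [← hσadd, ← hpe, ← hσadd]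
      congr 1
      ring
  have hKuniv : K = Set.univ := hmin K hKne hKcl hKinv
  have hPuniv : P = Set.univ := by
    apply Set.eq_univ_of_univ_subset
    rw [← hKuniv]
    have : K ⊆ σ ((0 : ℝ≥0) : ℝ) '' P := Set.iInter_subset _ 0
    intro ω' hω'
    obtain ⟨p, hp, hpe⟩ := this hω'
    rw [show ((0:ℝ≥0):ℝ) = (0:ℝ) by simp, hσid] at hpe
    exact hpe ▸ hp

  -- now conclude for each ω
  intro ω
  have : ω ∈ P := hPuniv ▸ Set.mem_univ ω
  obtain ⟨⟨u, ω'⟩, hxM, rfl⟩ := this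
  set x : E × Ω := (u, ω') with hxdef
  refine ⟨u, ?_, ?_⟩
  · -- almost recurrence
    intro ε hε
    -- cover M by the open sets U t = {z | dist (π t z) x < ε}
    set U : ℝ≥0 → Set (E × Ω) := fun t => {z | dist (π t z) x < ε} with hU
    have hUopen : ∀ t, IsOpen (U t) :=
      fun t => isOpen_lt (Continuous.dist (hπt t) continuous_const) continuous_const
    have hcover : M ⊆ ⋃ t, U t := by
      intro y hy
      have hxC : x ∈ closure (Set.range fun t : ℝ≥0 => π t y) :=
        (horbit y hy).symm ▸ hxM
      rw [Metric.mem_closure_iff] at hxC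
      obtain ⟨b, ⟨t, rfl⟩, hbd⟩ := hxC ε hε
      exact Set.mem_iUnion.2 ⟨t, by simpa [hU, dist_comm] using hbd⟩
    obtain ⟨F, hF⟩ := hMcomp.elim_finite_subcover U hUopen hcover
    set L : ℝ≥0 := F.sup id with hL
    refine ⟨L + 1, by positivity, ?_⟩
    intro a
    have hyM : π a x ∈ M := hMinv x hxM a
    obtain ⟨t, htF, hty⟩ := Set.mem_iUnion₂.1 (hF hyM)
    refine ⟨a + t, ⟨le_self_add, ?_⟩, ?_⟩
    · have : t ≤ L := Finset.le_sup (f := id) htF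
      calc a + t ≤ a + L := by gcongr
        _ ≤ a + (L + 1) := by gcongr; exact le_self_add
    · have : π (a + t) x = π t (π a x) := by
        rw [add_comm, hπadd]
      have hd : dist (π (a + t) x) x < ε := by rw [this]; exact hty
      simpa [hπdef, hxdef] using hd
  · -- compact orbit closure
    have horb : (Set.range fun t : ℝ≥0 => π t x) ⊆ M := by
      rintro z ⟨t, rfl⟩; exact hMinv x hxM t
    have : IsCompact (closure (Set.range fun t : ℝ≥0 => π t x)) :=
      IsCompact.of_isClosed_subset hMcomp isClosed_closure
        (closure_minimal horb hMcl)
    simpa [hπdef, hxdef] using this
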